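/- Let φ and α be CTL formulas and q an atom with q ∉ Var(φ) ∪ Var(α). If ψ is a result of forgetting {q} from φ ∧ (q ↔ α), then ψ ≡ φ. -/

import Mathlib

universe u

/-- A Kripke structure over a set of atoms: a finite nonempty set of states,
a serial transition relation, and a labeling function. -/
structure Kripke (Atom : Type u) where
  State : Type u
  stateFinite : Finite State
  stateNonempty : Nonempty State
  R : State → State → Prop
  serial : ∀ s, ∃ t, R s t
  L : State → Set Atom

instance {Atom : Type u} (M : Kripke Atom) : Finite M.State := M.stateFinite

/-- A K-structure: a Kripke structure together with one of its states. -/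
structure KStruct (Atom : Type u) where
  M : Kripke Atom
  s : M.State

/-- An initial structure: a Kripke structure with an initial state `s0`,
i.e. a state admitting a path visiting every state. -/
structure InitKripke (Atom : Type u) extends Kripke Atom where
  s0 : State
  initial : ∃ π : ℕ → State, π 0 = s0 ∧ (∀ n, R (π n) (π (n + 1))) ∧ ∀ t, ∃ n, π n = t

/-- The (initial) K-structure associated to an initial structure. -/
def InitKripke.toKS {Atom : Type u} (M : InitKripke Atom) : KStruct Atom :=
  ⟨M.toKripke, M.s0⟩

/-- The approximations `B_n^V` of `V`-bisimilarity on K-structures. -/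
def BRel {Atom : Type u} (V : Set Atom) : ℕ → KStruct Atom → KStruct Atom → Prop
  | 0 => fun K1 K2 => K1.M.L K1.s \ V = K2.M.L K2.s \ V
  | n + 1 => fun K1 K2 =>
      K1.M.L K1.s \ V = K2.M.L K2.s \ V ∧
      (∀ t1, K1.M.R K1.s t1 → ∃ t2, K2.M.R K2.s t2 ∧ BRel V n ⟨K1.M, t1⟩ ⟨K2.M, t2⟩) ∧
      (∀ t2, K2.M.R K2.s t2 → ∃ t1, K1.M.R K1.s t1 ∧ BRel V n ⟨K1.M, t1⟩ ⟨K2.M, t2⟩)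

/-- `V`-bisimilarity `K1 ↔_V K2` of K-structures. -/
def VBisim {Atom : Type u} (V : Set Atom) (K1 K2 : KStruct Atom) : Prop :=
  ∀ n, BRel V n K1 K2

/-- CTL formulas in existential normal form. -/
inductive CTL (Atom : Type u) : Type u
  | bot  : CTL Atom
  | top  : CTL Atom
  | atom (p : Atom) : CTL Atom
  | neg  (φ : CTL Atom) : CTL Atom
  | or   (φ ψ : CTL Atom) : CTL Atom
  | EX   (φ : CTL Atom) : CTL Atom
  | EG   (φ : CTL Atom) : CTL Atom
  | EU   (φ ψ : CTL Atom) : CTL Atom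

namespace CTL
variable {Atom : Type u}

def and (φ ψ : CTL Atom) : CTL Atom := .neg (.or (.neg φ) (.neg ψ))
def imp (φ ψ : CTL Atom) : CTL Atom := .or (.neg φ) ψ
def iff (φ ψ : CTL Atom) : CTL Atom := (φ.imp ψ).and (ψ.imp φ)
def AX (φ : CTL Atom) : CTL Atom := .neg (.EX (.neg φ))
def EF (φ : CTL Atom) : CTL Atom := .EU .top φ
def AF (φ : CTL Atom) : CTL Atom := .neg (.EG (.neg φ))
def AG (φ : CTL Atom) : CTL Atom := .neg (.EU .top (.neg φ))

/-- The set of atoms occurring in a formula. -/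
def vars : CTL Atom → Set Atom
  | .bot => ∅
  | .top => ∅
  | .atom p => {p}
  | .neg φ => vars φ
  | .or φ ψ => vars φ ∪ vars ψ
  | .EX φ => vars φ
  | .EG φ => vars φ
  | .EU φ ψ => vars φ ∪ vars ψ

end CTL

/-- The standard CTL satisfaction relation `(M,s) ⊨ φ`. -/
def Sat {Atom : Type u} (M : Kripke Atom) : CTL Atom → M.State → Prop
  | .bot => fun _ => False
  | .top => fun _ => True
  | .atom p => fun s => p ∈ M.L s
  | .neg φ => fun s => ¬ Sat M φ s
  | .or φ ψ => fun s => Sat M φ s ∨ Sat M ψ s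
  | .EX φ => fun s => ∃ t, M.R s t ∧ Sat M φ t
  | .EG φ => fun s => ∃ π : ℕ → M.State, π 0 = s ∧ (∀ n, M.R (π n) (π (n + 1))) ∧
      ∀ n, Sat M φ (π n)
  | .EU φ ψ => fun s => ∃ π : ℕ → M.State, π 0 = s ∧ (∀ n, M.R (π n) (π (n + 1))) ∧
      ∃ i, Sat M ψ (π i) ∧ ∀ j < i, Sat M φ (π j)

/-- Satisfaction for K-structures. -/
def KSat {Atom : Type u} (K : KStruct Atom) (φ : CTL Atom) : Prop := Sat K.M φ K.s

/-- The set of models (initial K-structures) of a formula. -/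
def CTLMod {Atom : Type u} (φ : CTL Atom) : Set (InitKripke Atom) :=
  {M | Sat M.toKripke φ M.s0}

def Entails {Atom : Type u} (φ ψ : CTL Atom) : Prop := CTLMod φ ⊆ CTLMod ψ

def CTLEquiv {Atom : Type u} (φ ψ : CTL Atom) : Prop := CTLMod φ = CTLMod ψ

/-- `IR φ V`: φ is irrelevant to the atoms in V. -/
def IR {Atom : Type u} (φ : CTL Atom) (V : Set Atom) : Prop :=
  ∃ ψ : CTL Atom, CTL.vars ψ ∩ V = ∅ ∧ CTLEquiv φ ψ

/-- `V`-bisimilarity of depth-`n` computation trees rooted at `s1` (in `M1`) and `s2` (in `M2`). -/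
def TreeBisim {Atom : Type u} (V : Set Atom) (M1 M2 : Kripke Atom) :
    ℕ → M1.State → M2.State → Prop
  | 0 => fun s1 s2 => M1.L s1 \ V = M2.L s2 \ V
  | n + 1 => fun s1 s2 =>
      M1.L s1 \ V = M2.L s2 \ V ∧
      (∀ t1, M1.R s1 t1 → ∃ t2, M2.R s2 t2 ∧ TreeBisim V M1 M2 n t1 t2) ∧
      (∀ t2, M2.R s2 t2 → ∃ t1, M1.R s1 t1 ∧ TreeBisim V M1 M2 n t1 t2)

/-- Finite conjunction of a list of formulas. -/
def andList {Atom : Type u} : List (CTL Atom) → CTL Atom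
  | [] => .top
  | φ :: l => φ.and (andList l)

/-- Finite disjunction of a list of formulas. -/
def orList {Atom : Type u} : List (CTL Atom) → CTL Atom
  | [] => .bot
  | φ :: l => .or φ (orList l)

/-- A list enumerating a subset of a finite type. -/
noncomputable def setToList {α : Type u} [Finite α] (s : Set α) : List α :=
  s.toFinite.toFinset.toList

/-- The list of `R`-successors of a state. -/
noncomputable def Kripke.succList {Atom : Type u} (M : Kripke Atom) (s : M.State) :
    List M.State :=
  setToList {t | M.R s t}

/-- The characterizing formula `F_V(Tr_0(s))` of the depth-0 computation tree. -/
noncomputable def charTree0 {Atom : Type u} [Finite Atom] (M : Kripke Atom) (V : Set Atom)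
    (s : M.State) : CTL Atom :=
  (andList ((setToList (V ∩ M.L s)).map CTL.atom)).and
    (andList ((setToList (V \ M.L s)).map fun q => CTL.neg (CTL.atom q)))

/-- The characterizing formula `F_V(Tr_n(s))` of the depth-`n` computation tree of `s`. -/
noncomputable def charTree {Atom : Type u} [Finite Atom] (M : Kripke Atom) (V : Set Atom) :
    ℕ → M.State → CTL Atom
  | 0 => fun s => charTree0 M V s
  | k + 1 => fun s =>
      (andList ((M.succList s).map fun t => CTL.EX (charTree M V k t))).and
        ((CTL.AX (orList ((M.succList s).map (charTree M V k)))).and (charTree0 M V s))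

/-- `dis_V(M,s,s',k)`: `s` and `s'` are `V`-distinguishable, and `k` is the least depth at which
their computation trees fail to be `(𝒜∖V)`-bisimilar. -/
def dis {Atom : Type u} (M : Kripke Atom) (V : Set Atom) (s s' : M.State) (k : ℕ) : Prop :=
  ¬ VBisim Vᶜ ⟨M, s⟩ ⟨M, s'⟩ ∧
  IsLeast {n | ¬ TreeBisim Vᶜ M M n s s'} k

/-- The characterization number `ch(M,V)`. -/
noncomputable def ch {Atom : Type u} (M : Kripke Atom) (V : Set Atom) : ℕ :=
  letI := Classical.dec (∃ s s' k, dis M V s s' k)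
  if ∃ s s' k, dis M V s s' k then
    sSup {k | ∃ s s', dis M V s s' k}
  else
    sInf {k | (fun s s' : M.State => BRel Vᶜ k ⟨M, s⟩ ⟨M, s'⟩) =
              (fun s s' : M.State => BRel Vᶜ (k + 1) ⟨M, s⟩ ⟨M, s'⟩)}

/-- The characterizing formula `F_V(M,s0)` of an initial K-structure on `V`. -/
noncomputable def charForm {Atom : Type u} [Finite Atom] (M : InitKripke Atom) (V : Set Atom) :
    CTL Atom :=
  let T : M.State → CTL Atom := fun s => charTree M.toKripke V (ch M.toKripke V) s
  (T M.s0).and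
    (andList ((setToList (Set.univ : Set M.State)).map fun s =>
      CTL.AG ((T s).imp
        ((andList ((M.toKripke.succList s).map fun t => CTL.EX (T t))).and
          (CTL.AX (orList ((M.toKripke.succList s).map T)))))))

/-- `ψ` is a result of forgetting `V` from `φ`. -/
def IsForget {Atom : Type u} (φ : CTL Atom) (V : Set Atom) (ψ : CTL Atom) : Prop :=
  CTL.vars ψ ∩ V = ∅ ∧
  CTLMod ψ = {K : InitKripke Atom | ∃ K' ∈ CTLMod φ, VBisim V K'.toKS K.toKS}

section ForgetAux

variable {Atom : Type u}

theorem BRel_mono (V : Set Atom) :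
    ∀ n (K1 K2 : KStruct Atom), BRel V (n+1) K1 K2 → BRel V n K1 K2
  | 0, _, _, h => h.1
  | n+1, K1, K2, h =>
    ⟨h.1,
     fun t1 ht1 => by
       obtain ⟨t2, ht2, hb⟩ := h.2.1 t1 ht1
       exact ⟨t2, ht2, BRel_mono V n _ _ hb⟩,
     fun t2 ht2 => by
       obtain ⟨t1, ht1, hb⟩ := h.2.2 t2 ht2
       exact ⟨t1, ht1, BRel_mono V n _ _ hb⟩⟩

theorem BRel_anti (V : Set Atom) {K1 K2 : KStruct Atom} {m n : ℕ} (hmn : m ≤ n)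
    (h : BRel V n K1 K2) : BRel V m K1 K2 := by
  induction n with
  | zero => rw [Nat.le_zero.mp hmn]; exact h
  | succ n ih =>
    rcases Nat.lt_or_ge m (n+1) with h' | h'
    · exact ih (Nat.lt_succ_iff.mp h') (BRel_mono V n _ _ h)
    · rw [le_antisymm hmn h']; exact h

theorem BRel_symm (V : Set Atom) :
    ∀ n (K1 K2 : KStruct Atom), BRel V n K1 K2 → BRel V n K2 K1
  | 0, _, _, h => h.symm
  | n+1, K1, K2, h =>
    ⟨h.1.symm,
     fun t2 ht2 => by
       obtain ⟨t1, ht1, hb⟩ := h.2.2 t2 ht2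
       exact ⟨t1, ht1, BRel_symm V n _ _ hb⟩,
     fun t1 ht1 => by
       obtain ⟨t2, ht2, hb⟩ := h.2.1 t1 ht1
       exact ⟨t2, ht2, BRel_symm V n _ _ hb⟩⟩

theorem VBisim_symm {V : Set Atom} {K1 K2 : KStruct Atom} (h : VBisim V K1 K2) :
    VBisim V K2 K1 := fun n => BRel_symm V n _ _ (h n)

theorem VBisim_forth {V : Set Atom} {M1 M2 : Kripke Atom} {s1 : M1.State} {s2 : M2.State}
    {t1 : M1.State} (h : VBisim V ⟨M1, s1⟩ ⟨M2, s2⟩) (ht : M1.R s1 t1) :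
    ∃ t2, M2.R s2 t2 ∧ VBisim V ⟨M1, t1⟩ ⟨M2, t2⟩ := by
  have hsel : ∀ n : ℕ, ∃ t2 : {t : M2.State // M2.R s2 t},
      BRel V n ⟨M1, t1⟩ ⟨M2, t2.1⟩ := by
    intro n
    obtain ⟨t2, ht2, hb⟩ := (h (n+1)).2.1 t1 ht
    exact ⟨⟨t2, ht2⟩, hb⟩
  choose f hf using hsel
  obtain ⟨t2, hinf⟩ := Finite.exists_infinite_fiber f
  refine ⟨t2.1, t2.2, fun m => ?_⟩
  have hinf' : (f ⁻¹' {t2}).Infinite := Set.infinite_coe_iff.mp hinf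
  obtain ⟨n, hn, hmn⟩ := hinf'.exists_gt m
  have := hf n
  rw [Set.mem_preimage, Set.mem_singleton_iff] at hn
  rw [hn] at this
  exact BRel_anti V (le_of_lt hmn) this

noncomputable def liftPath {V : Set Atom} {M1 M2 : Kripke Atom}
    (π : ℕ → M1.State) (hR : ∀ n, M1.R (π n) (π (n+1))) (s2 : M2.State)
    (h : VBisim V ⟨M1, π 0⟩ ⟨M2, s2⟩) :
    ∀ n, {t : M2.State // VBisim V ⟨M1, π n⟩ ⟨M2, t⟩}
  | 0 => ⟨s2, h⟩
  | n + 1 =>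
    ⟨(VBisim_forth (liftPath π hR s2 h n).2 (hR n)).choose,
     (VBisim_forth (liftPath π hR s2 h n).2 (hR n)).choose_spec.2⟩

theorem liftPath_step {V : Set Atom} {M1 M2 : Kripke Atom}
    (π : ℕ → M1.State) (hR : ∀ n, M1.R (π n) (π (n+1))) (s2 : M2.State)
    (h : VBisim V ⟨M1, π 0⟩ ⟨M2, s2⟩) (n : ℕ) :
    M2.R (liftPath π hR s2 h n).1 (liftPath π hR s2 h (n+1)).1 :=
  (VBisim_forth (liftPath π hR s2 h n).2 (hR n)).choose_spec.1

theorem exists_lift_path {V : Set Atom} {M1 M2 : Kripke Atom}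
    (π : ℕ → M1.State) (hR : ∀ n, M1.R (π n) (π (n+1))) (s2 : M2.State)
    (h : VBisim V ⟨M1, π 0⟩ ⟨M2, s2⟩) :
    ∃ π' : ℕ → M2.State, π' 0 = s2 ∧ (∀ n, M2.R (π' n) (π' (n+1))) ∧
      ∀ n, VBisim V ⟨M1, π n⟩ ⟨M2, π' n⟩ :=
  ⟨fun n => (liftPath π hR s2 h n).1, rfl, liftPath_step π hR s2 h,
   fun n => (liftPath π hR s2 h n).2⟩

theorem sat_invariant {V : Set Atom} :
    ∀ (φ : CTL Atom), (∀ p ∈ CTL.vars φ, p ∉ V) →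
      ∀ (K1 K2 : KStruct Atom), VBisim V K1 K2 → (KSat K1 φ ↔ KSat K2 φ) := by
  intro φ
  induction φ with
  | bot => intro _ K1 K2 _; simp [KSat, Sat]
  | top => intro _ K1 K2 _; simp [KSat, Sat]
  | atom p =>
    intro hv K1 K2 h
    have hp : p ∉ V := hv p rfl
    have h0 := h 0
    simp only [BRel] at h0
    simp only [KSat, Sat]
    constructor
    · intro hm
      have : p ∈ K1.M.L K1.s \ V := ⟨hm, hp⟩
      rw [h0] at this; exact this.1
    · intro hm
      have : p ∈ K2.M.L K2.s \ V := ⟨hm, hp⟩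
      rw [← h0] at this; exact this.1
  | neg φ ih =>
    intro hv K1 K2 h
    simp only [KSat, Sat]
    exact not_congr (ih hv K1 K2 h)
  | or φ ψ ihφ ihψ =>
    intro hv K1 K2 h
    simp only [KSat, Sat]
    exact or_congr (ihφ (fun p hp => hv p (Or.inl hp)) K1 K2 h)
      (ihψ (fun p hp => hv p (Or.inr hp)) K1 K2 h)
  | EX φ ih =>
    intro hv K1 K2 h
    obtain ⟨M1, s1⟩ := K1; obtain ⟨M2, s2⟩ := K2
    simp only [KSat, Sat]
    constructor
    · rintro ⟨t1, ht1, hs⟩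
      obtain ⟨t2, ht2, hb⟩ := VBisim_forth h ht1
      exact ⟨t2, ht2, (ih hv _ _ hb).mp hs⟩
    · rintro ⟨t2, ht2, hs⟩
      obtain ⟨t1, ht1, hb⟩ := VBisim_forth (VBisim_symm h) ht2
      exact ⟨t1, ht1, (ih hv _ _ (VBisim_symm hb)).mpr hs⟩
  | EG φ ih =>
    intro hv K1 K2 h
    obtain ⟨M1, s1⟩ := K1; obtain ⟨M2, s2⟩ := K2
    simp only [KSat, Sat]
    constructor
    · rintro ⟨π, h0, hR, hs⟩
      obtain ⟨π', h0', hR', hb⟩ := exists_lift_path π hR s2 (by rw [h0]; exact h)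
      exact ⟨π', h0', hR', fun n => (ih hv _ _ (hb n)).mp (hs n)⟩
    · rintro ⟨π, h0, hR, hs⟩
      obtain ⟨π', h0', hR', hb⟩ :=
        exists_lift_path π hR s1 (by rw [h0]; exact VBisim_symm h)
      exact ⟨π', h0', hR', fun n => (ih hv _ _ (VBisim_symm (hb n))).mpr (hs n)⟩
  | EU φ ψ ihφ ihψ =>
    intro hv K1 K2 h
    have hvφ : ∀ p ∈ CTL.vars φ, p ∉ V := fun p hp => hv p (Or.inl hp)
    have hvψ : ∀ p ∈ CTL.vars ψ, p ∉ V := fun p hp => hv p (Or.inr hp)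
    obtain ⟨M1, s1⟩ := K1; obtain ⟨M2, s2⟩ := K2
    simp only [KSat, Sat]
    constructor
    · rintro ⟨π, h0, hR, i, hi, hj⟩
      obtain ⟨π', h0', hR', hb⟩ := exists_lift_path π hR s2 (by rw [h0]; exact h)
      exact ⟨π', h0', hR', i, (ihψ hvψ _ _ (hb i)).mp hi,
        fun j hji => (ihφ hvφ _ _ (hb j)).mp (hj j hji)⟩
    · rintro ⟨π, h0, hR, i, hi, hj⟩
      obtain ⟨π', h0', hR', hb⟩ :=
        exists_lift_path π hR s1 (by rw [h0]; exact VBisim_symm h)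
      exact ⟨π', h0', hR', i, (ihψ hvψ _ _ (VBisim_symm (hb i))).mpr hi,
        fun j hji => (ihφ hvφ _ _ (VBisim_symm (hb j))).mpr (hj j hji)⟩

/-- Change only the labeling of a Kripke structure. -/
def Kripke.relabel (M : Kripke Atom) (L' : M.State → Set Atom) : Kripke Atom :=
  { M with L := L' }

theorem sat_relabel (M : Kripke Atom) (L' : M.State → Set Atom) :
    ∀ (φ : CTL Atom), (∀ s p, p ∈ CTL.vars φ → (p ∈ L' s ↔ p ∈ M.L s)) →
      ∀ s, Sat (M.relabel L') φ s ↔ Sat M φ s := by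
  intro φ
  induction φ with
  | bot => intro _ s; simp [Sat]
  | top => intro _ s; simp [Sat]
  | atom p => intro hL s; simpa [Sat, Kripke.relabel] using hL s p rfl
  | neg φ ih => intro hL s; simp only [Sat]; exact not_congr (ih hL s)
  | or φ ψ ihφ ihψ =>
    intro hL s
    simp only [Sat]
    exact or_congr (ihφ (fun s p hp => hL s p (Or.inl hp)) s)
      (ihψ (fun s p hp => hL s p (Or.inr hp)) s)
  | EX φ ih =>
    intro hL s
    simp only [Sat]
    exact exists_congr fun t => and_congr Iff.rfl (ih hL t)
  | EG φ ih =>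
    intro hL s
    simp only [Sat]
    exact exists_congr fun π => and_congr Iff.rfl (and_congr Iff.rfl
      (forall_congr' fun n => ih hL (π n)))
  | EU φ ψ ihφ ihψ =>
    intro hL s
    simp only [Sat]
    refine exists_congr fun π => and_congr Iff.rfl (and_congr Iff.rfl
      (exists_congr fun i => and_congr (ihψ (fun s p hp => hL s p (Or.inr hp)) (π i))
        (forall_congr' fun j => forall_congr' fun _ =>
          ihφ (fun s p hp => hL s p (Or.inl hp)) (π j))))

theorem brel_relabel (M : Kripke Atom) (V : Set Atom) (L' : M.State → Set Atom)
    (hL : ∀ s, L' s \ V = M.L s \ V) :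
    ∀ (n : ℕ) (s : M.State), BRel V n ⟨M.relabel L', s⟩ ⟨M, s⟩
  | 0, s => hL s
  | n+1, s =>
    ⟨hL s,
     fun t ht => ⟨t, ht, brel_relabel M V L' hL n t⟩,
     fun t ht => ⟨t, ht, brel_relabel M V L' hL n t⟩⟩

theorem sat_and {M : Kripke Atom} {φ ψ : CTL Atom} {s : M.State} :
    Sat M (φ.and ψ) s ↔ Sat M φ s ∧ Sat M ψ s := by
  simp [CTL.and, Sat]

theorem sat_iff_iff {M : Kripke Atom} {φ ψ : CTL Atom} {s : M.State} :
    Sat M (φ.iff ψ) s ↔ (Sat M φ s ↔ Sat M ψ s) := by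
  simp only [CTL.iff, CTL.imp, CTL.and, Sat]
  tauto

end ForgetAux

/-- if `q ∉ Var(φ) ∪ Var(α)` and `ψ` is a result of forgetting `{q}` from
`φ ∧ (q ↔ α)`, then `ψ ≡ φ`. -/
theorem forget_def_atom {Atom : Type u} [Finite Atom] (φ α : CTL Atom) (q : Atom)
    (hq : q ∉ CTL.vars φ ∪ CTL.vars α) (ψ : CTL Atom)
    (h : IsForget (φ.and ((CTL.atom q).iff α)) {q} ψ) :
    CTLEquiv ψ φ := by
  obtain ⟨hvψ, hmod⟩ := h
  rw [Set.mem_union] at hq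
  push_neg at hq
  obtain ⟨hqφ, hqα⟩ := hq
  have hdisjφ : ∀ p ∈ CTL.vars φ, p ∉ ({q} : Set Atom) := by
    intro p hp hpq
    rw [Set.mem_singleton_iff] at hpq
    exact hqφ (hpq ▸ hp)
  ext K
  simp only [CTLMod, Set.mem_setOf_eq]
  constructor
  · intro hK
    have hKmem : K ∈ CTLMod ψ := hK
    rw [hmod] at hKmem
    obtain ⟨K', hK', hbis⟩ := hKmem
    have hφ' : Sat K'.toKripke φ K'.s0 := (sat_and.mp hK').1
    exact (sat_invariant φ hdisjφ K'.toKS K.toKS hbis).mp hφ'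
  · intro hK
    set L' : K.State → Set Atom :=
      fun s => {p | (p ∈ K.L s ∧ p ≠ q) ∨ (p = q ∧ Sat K.toKripke α s)} with hL'def
    have hagree : ∀ (s : K.State) (p : Atom), p ≠ q → (p ∈ L' s ↔ p ∈ K.L s) := by
      intro s p hpq
      simp only [hL'def, Set.mem_setOf_eq]
      tauto
    have hdiff : ∀ s : K.State, L' s \ {q} = K.L s \ {q} := by
      intro s
      ext p
      simp only [Set.mem_diff, Set.mem_singleton_iff]
      constructor
      · rintro ⟨hp, hpq⟩
        exact ⟨(hagree s p hpq).mp hp, hpq⟩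
      · rintro ⟨hp, hpq⟩
        exact ⟨(hagree s p hpq).mpr hp, hpq⟩
    refine show K ∈ CTLMod ψ from ?_
    rw [hmod]
    refine ⟨⟨K.toKripke.relabel L', K.s0, K.initial⟩, ?_, ?_⟩
    · show Sat (K.toKripke.relabel L') (φ.and ((CTL.atom q).iff α)) K.s0
      apply sat_and.mpr
      constructor
      · exact (sat_relabel K.toKripke L' φ
          (fun s p hp => hagree s p (fun hpq => hqφ (hpq ▸ hp))) K.s0).mpr hK
      · apply sat_iff_iff.mpr
        have hα : Sat (K.toKripke.relabel L') α K.s0 ↔ Sat K.toKripke α K.s0 :=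
          sat_relabel K.toKripke L' α
            (fun s p hp => hagree s p (fun hpq => hqα (hpq ▸ hp))) K.s0
        have hqmem : Sat (K.toKripke.relabel L') (CTL.atom q) K.s0 ↔
            Sat K.toKripke α K.s0 := by
          show q ∈ L' K.s0 ↔ _
          simp only [hL'def, Set.mem_setOf_eq]
          tauto
        rw [hqmem, hα]
    · exact fun n => brel_relabel K.toKripke {q} L' hdiff n K.s0
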